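/- If f ∈ ℱ, then for no pair (ω ∈ C(M,ℝ), α ∈ ℝ with α ≠ 0) does one have Q_ω = α·f. (Proposition 2.3: elements of ℱ are forbidden functions up to nonzero scale.) -/

import Mathlib

open MeasureTheory

variable {M : Type*} [TopologicalSpace M] [MeasurableSpace M]

/-- The transformed Q-curvature `Q_ω = e^{-nω}(Q + Pω)`. -/
noncomputable def Qcurv (n : ℝ) (P : C(M, ℝ) →ₗ[ℝ] C(M, ℝ)) (Q ω : C(M, ℝ)) : C(M, ℝ) :=
  ⟨fun x => Real.exp (-n * ω x) * (Q x + P ω x),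
    (Real.continuous_exp.comp (continuous_const.mul ω.continuous)).mul
      (Q.continuous.add (P ω).continuous)⟩

/-- The conformally rescaled measure `μ_ω`, with density `e^{nω}` w.r.t. `μ`. -/
noncomputable def confMeasure (μ : Measure M) (n : ℝ) (ω : C(M, ℝ)) : Measure M :=
  μ.withDensity fun x => ENNReal.ofReal (Real.exp (n * ω x))

/-- `𝒩(𝒬) = {u ∈ ker P : ∫ u·Q dμ = 0}`. -/
def NQ (μ : Measure M) (P : C(M, ℝ) →ₗ[ℝ] C(M, ℝ)) (Q : C(M, ℝ)) : Set C(M, ℝ) :=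
  {u | P u = 0 ∧ ∫ x, u x * Q x ∂μ = 0}

/-- `ℱ = ⋂_ω ℱ^ω`, where `ℱ^ω` is the set of `f` not `L²(μ_ω)`-orthogonal to `𝒩(𝒬)`. -/
def Fcal (μ : Measure M) (n : ℝ) (P : C(M, ℝ) →ₗ[ℝ] C(M, ℝ)) (Q : C(M, ℝ)) : Set C(M, ℝ) :=
  {f | ∀ ω : C(M, ℝ), ∃ u ∈ NQ μ P Q, ∫ x, f x * u x ∂(confMeasure μ n ω) ≠ 0}

variable [BorelSpace M] [CompactSpace M] [ConnectedSpace M]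
variable (μ : Measure M) [IsFiniteMeasure μ] [Measure.IsOpenPosMeasure μ]
variable (n : ℝ) (P : C(M, ℝ) →ₗ[ℝ] C(M, ℝ)) (Q : C(M, ℝ))

lemma cont_integrable' {M : Type*} [TopologicalSpace M] [MeasurableSpace M]
    [OpensMeasurableSpace M] [CompactSpace M] (μ : Measure M) [IsFiniteMeasure μ]
    {g : M → ℝ} (hg : Continuous g) : Integrable g μ :=
  hg.integrable_of_hasCompactSupport (HasCompactSupport.of_compactSpace g)

lemma conf_integral' {M : Type*} [TopologicalSpace M] [MeasurableSpace M]
    [OpensMeasurableSpace M] (μ : Measure M) (n : ℝ) (ω : C(M, ℝ)) (g : M → ℝ) :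
    ∫ x, g x ∂(confMeasure μ n ω) = ∫ x, Real.exp (n * ω x) * g x ∂μ := by
  have hmeas : Measurable fun x => (Real.exp (n * ω x)).toNNReal :=
    (Real.continuous_exp.comp (continuous_const.mul ω.continuous)).measurable.real_toNNReal
  have h1 : confMeasure μ n ω
      = μ.withDensity fun x => ((Real.exp (n * ω x)).toNNReal : ENNReal) := by
    simp only [confMeasure, ENNReal.ofReal]
  rw [h1, integral_withDensity_eq_integral_smul hmeas]
  congr 1; ext x
  rw [NNReal.smul_def, Real.coe_toNNReal _ (Real.exp_pos _).le, smul_eq_mul]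

theorem stmt5
    (hn : 0 < n)
    (hPc : ∀ c : ℝ, P (ContinuousMap.const M c) = 0)
    (hPsa : ∀ u v : C(M, ℝ), ∫ x, u x * P v x ∂μ = ∫ x, P u x * v x ∂μ)
    (f : C(M, ℝ)) (hf : f ∈ Fcal μ n P Q) :
    ∀ (ω : C(M, ℝ)) (α : ℝ), α ≠ 0 → Qcurv n P Q ω ≠ α • f := by
  intro ω α hα heq
  obtain ⟨u, ⟨hPu, hQu⟩, hne⟩ := hf ω
  apply hne
  have key : α * ∫ x, f x * u x ∂(confMeasure μ n ω) = 0 := by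
    have h1 : α * ∫ x, f x * u x ∂(confMeasure μ n ω)
        = ∫ x, Qcurv n P Q ω x * u x ∂(confMeasure μ n ω) := by
      rw [heq, ← integral_const_mul]
      congr 1; ext x
      simp [mul_assoc]
    rw [h1, conf_integral']
    have h2 : (fun x => Real.exp (n * ω x) * (Qcurv n P Q ω x * u x))
        = fun x => u x * Q x + u x * P ω x := by
      ext x
      simp only [Qcurv, ContinuousMap.coe_mk]
      have h3 : Real.exp (n * ω x) * Real.exp (-n * ω x) = 1 := by
        rw [← Real.exp_add, show n * ω x + -n * ω x = 0 by ring, Real.exp_zero]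
      linear_combination ((Q x + P ω x) * u x) * h3
    rw [h2, integral_add (cont_integrable' μ (g := fun x => u x * Q x) (u.continuous.mul Q.continuous))
      (cont_integrable' μ (g := fun x => u x * P ω x) (u.continuous.mul (P ω).continuous)), hQu, hPsa u ω, hPu]
    simp
  exact (mul_eq_zero.mp key).resolve_left hα
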